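/- Lerch's identity: for nonnegative integers q, r, p with p ≥ q and p ≥ s for all relevant s (so that binomial coefficients in denominators are nonzero), we have ∑_{s=0}^{q} (-1)^s · (C(q,s)·C(r,s))/C(p,s) = C(p−r, q)/C(p, q). -/

import Mathlib

lemma lerch_aux_prod_ne_zero (p n : ℕ) (h : n ≤ p) :
    (∏ i ∈ Finset.range n, ((p : ℚ) - i)) ≠ 0 := by
  rw [Finset.prod_ne_zero_iff]
  intro i hi
  have hi' : i < p := lt_of_lt_of_le (Finset.mem_range.mp hi) h
  have : (i : ℚ) < p := by exact_mod_cast hi'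
  exact sub_ne_zero.mpr this.ne'

/-- Lerch's identity: for nonnegative integers `q ≤ p` and `r`,
`∑_{s=0}^{q} (-1)^s C(q,s)C(r,s)/C(p,s) = C(p−r,q)/C(p,q)`,
where the right-hand side is expressed via generalized binomial coefficients as
`∏_{i<q} (p−r−i) / ∏_{i<q} (p−i)`. -/
theorem lerch_identity (p q r : ℕ) (hpq : q ≤ p) :
    ∑ s ∈ Finset.range (q + 1),
        (-1 : ℚ) ^ s * ((q.choose s : ℚ) * (r.choose s : ℚ)) / (p.choose s : ℚ)
      = (∏ i ∈ Finset.range q, ((p : ℚ) - r - i)) /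
        (∏ i ∈ Finset.range q, ((p : ℚ) - i)) := by
  induction q generalizing p r with
  | zero => simp
  | succ q ih =>
    have hp1 : 1 ≤ p := le_trans (Nat.succ_le_succ (Nat.zero_le q)) hpq
    have hqp : q ≤ p - 1 := by omega
    have hp0 : (p : ℚ) ≠ 0 := by positivity
    have hDne : (∏ i ∈ Finset.range q, ((p : ℚ) - 1 - i)) ≠ 0 := by
      have := lerch_aux_prod_ne_zero (p - 1) q hqp
      have hc : ((p - 1 : ℕ) : ℚ) = (p : ℚ) - 1 := by
        push_cast [Nat.cast_sub hp1]; ring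
      simpa [hc, sub_sub] using this
    have hDne' : (∏ i ∈ Finset.range (q + 1), ((p : ℚ) - i)) ≠ 0 :=
      lerch_aux_prod_ne_zero p (q + 1) hpq
    induction r with
    | zero =>
      have hterm : ∀ s ∈ Finset.range (q + 1 + 1),
          (-1 : ℚ) ^ s * (((q + 1).choose s : ℚ) * ((Nat.choose 0 s : ℕ) : ℚ))
            / ((p.choose s : ℕ) : ℚ)
          = if s = 0 then 1 else 0 := by
        intro s _
        cases s with
        | zero => simp
        | succ t => simp [Nat.choose_eq_zero_of_lt (Nat.succ_pos t)]
      rw [Finset.sum_congr rfl hterm]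
      rw [Finset.sum_ite_eq' (Finset.range (q + 1 + 1)) 0 (fun _ => (1 : ℚ))]
      simp [hDne']
    | succ r ihr =>
      have key := ihr
      -- termwise recurrence: C(r+1,s+1) = C(r,s) + C(r,s+1)
      have expand :
          ∑ s ∈ Finset.range (q + 1 + 1),
              (-1 : ℚ) ^ s * (((q + 1).choose s : ℚ) * ((r + 1).choose s : ℚ))
                / (p.choose s : ℚ)
          = (∑ s ∈ Finset.range (q + 1 + 1),
              (-1 : ℚ) ^ s * (((q + 1).choose s : ℚ) * (r.choose s : ℚ))
                / (p.choose s : ℚ))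
            + ∑ s ∈ Finset.range (q + 1),
              (-1 : ℚ) ^ (s + 1) * (((q + 1).choose (s + 1) : ℚ) * (r.choose s : ℚ))
                / (p.choose (s + 1) : ℚ) := by
        rw [Finset.sum_range_succ'
          (fun s => (-1 : ℚ) ^ s * (((q + 1).choose s : ℚ) * ((r + 1).choose s : ℚ))
                / (p.choose s : ℚ)) (q + 1),
          Finset.sum_range_succ'
          (fun s => (-1 : ℚ) ^ s * (((q + 1).choose s : ℚ) * (r.choose s : ℚ))
                / (p.choose s : ℚ)) (q + 1)]
        have h1 : ∀ s ∈ Finset.range (q + 1),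
            (-1 : ℚ) ^ (s + 1) * (((q + 1).choose (s + 1) : ℚ) * ((r + 1).choose (s + 1) : ℚ))
                / (p.choose (s + 1) : ℚ)
            = (-1 : ℚ) ^ (s + 1) * (((q + 1).choose (s + 1) : ℚ) * (r.choose (s + 1) : ℚ))
                / (p.choose (s + 1) : ℚ)
              + (-1 : ℚ) ^ (s + 1) * (((q + 1).choose (s + 1) : ℚ) * (r.choose s : ℚ))
                / (p.choose (s + 1) : ℚ) := by
          intro s _
          rw [Nat.choose_succ_succ r s]
          push_cast
          ring
        rw [Finset.sum_congr rfl h1, Finset.sum_add_distrib]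
        simp
        ring
      -- rewrite the correction sum via the (p-1, q) case
      have step1 : ∀ s ∈ Finset.range (q + 1),
          (-1 : ℚ) ^ (s + 1) * (((q + 1).choose (s + 1) : ℚ) * (r.choose s : ℚ))
                / (p.choose (s + 1) : ℚ)
          = -((((q : ℚ) + 1) / p) *
              ((-1 : ℚ) ^ s * ((q.choose s : ℚ) * (r.choose s : ℚ))
                / ((p - 1).choose s : ℚ))) := by
        intro s hs
        have hs' : s ≤ q := Nat.lt_succ_iff.mp (Finset.mem_range.mp hs)
        have e1 : ((q + 1 : ℕ) : ℚ) * (q.choose s : ℚ)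
            = ((q + 1).choose (s + 1) : ℚ) * ((s + 1 : ℕ) : ℚ) := by
          exact_mod_cast congrArg (Nat.cast : ℕ → ℚ) (Nat.add_one_mul_choose_eq q s)
        have e2 : ((p : ℕ) : ℚ) * ((p - 1).choose s : ℚ)
            = (p.choose (s + 1) : ℚ) * ((s + 1 : ℕ) : ℚ) := by
          have := Nat.add_one_mul_choose_eq (p - 1) s
          rw [Nat.sub_add_cancel hp1] at this
          exact_mod_cast congrArg (Nat.cast : ℕ → ℚ) this
        have hps : s + 1 ≤ p := by omega
        have hcp : ((p.choose (s + 1) : ℕ) : ℚ) ≠ 0 := by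
          exact_mod_cast (Nat.choose_pos hps).ne'
        have hcp1 : (((p - 1).choose s : ℕ) : ℚ) ≠ 0 := by
          exact_mod_cast (Nat.choose_pos (le_trans hs' hqp)).ne'
        have hs1 : ((s + 1 : ℕ) : ℚ) ≠ 0 := by positivity
        push_cast at e1 e2 ⊢
        field_simp
        linear_combination ((-1 : ℚ) ^ s * (r.choose s : ℚ) * (p.choose (s + 1) : ℚ)) * e1
          - ((-1 : ℚ) ^ s * (r.choose s : ℚ) * ((q + 1).choose (s + 1) : ℚ)) * e2
      have corr :
          ∑ s ∈ Finset.range (q + 1),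
              (-1 : ℚ) ^ (s + 1) * (((q + 1).choose (s + 1) : ℚ) * (r.choose s : ℚ))
                / (p.choose (s + 1) : ℚ)
          = -((((q : ℚ) + 1) / p) *
              ((∏ i ∈ Finset.range q, ((p : ℚ) - 1 - r - i)) /
               (∏ i ∈ Finset.range q, ((p : ℚ) - 1 - i)))) := by
        rw [Finset.sum_congr rfl step1]
        rw [Finset.sum_neg_distrib, ← Finset.mul_sum, ih (p - 1) r hqp]
        have hc : ((p - 1 : ℕ) : ℚ) = (p : ℚ) - 1 := by
          push_cast [Nat.cast_sub hp1]; ring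
        rw [hc]
      rw [expand, corr, key]
      -- now pure algebra with products
      have hA : (∏ i ∈ Finset.range (q + 1), ((p : ℚ) - r - i))
          = ((p : ℚ) - r) * ∏ i ∈ Finset.range q, ((p : ℚ) - 1 - r - i) := by
        rw [Finset.prod_range_succ' (fun i => (p : ℚ) - r - i) q]
        push_cast
        rw [mul_comm]
        congr 1
        · norm_num
        · exact Finset.prod_congr rfl fun i _ => by push_cast; ring
      have hC : (∏ i ∈ Finset.range (q + 1), ((p : ℚ) - ((r : ℚ) + 1) - i))
          = (∏ i ∈ Finset.range q, ((p : ℚ) - 1 - r - i)) * ((p : ℚ) - r - 1 - q) := by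
        rw [Finset.prod_range_succ (fun i => (p : ℚ) - ((r : ℚ) + 1) - i) q]
        congr 1
        · exact Finset.prod_congr rfl fun i _ => by ring
        · ring
      have hD : (∏ i ∈ Finset.range (q + 1), ((p : ℚ) - i))
          = (p : ℚ) * ∏ i ∈ Finset.range q, ((p : ℚ) - 1 - i) := by
        rw [Finset.prod_range_succ' (fun i => (p : ℚ) - i) q]
        push_cast
        rw [mul_comm]
        congr 1
        · norm_num
        · exact Finset.prod_congr rfl fun i _ => by push_cast; ring
      push_cast
      rw [hA, hC, hD]
      field_simp
      ring
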